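/- arXiv:1709.08000 — 4 statements merged into one kernel-verified Lean document; each statement's English description precedes it below -/
import Mathlib

section
/- For all natural numbers n and m, the Bell numbers satisfy Spivey's formula: B_{n+m} = \sum_{k=0}^{n} \sum_{j=0}^{m} j^{n-k} * S(m,j) * C(n,k) * B_k (with the convention 0^0 = 1). -/
/-- Stirling numbers of the second kind. -/
def stirling2 : ℕ → ℕ → ℕ
  | 0, 0 => 1
  | 0, _ + 1 => 0
  | _ + 1, 0 => 0
  | n + 1, k + 1 => stirling2 n k + (k + 1) * stirling2 n (k + 1)

/-- Bell numbers. -/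
def bell (n : ℕ) : ℕ := ∑ k ∈ Finset.range (n + 1), stirling2 n k


lemma stirling2_eq_zero : ∀ n k : ℕ, n < k → stirling2 n k = 0
  | 0, 0, h => absurd h (by omega)
  | 0, k + 1, _ => rfl
  | n + 1, 0, h => absurd h (by omega)
  | n + 1, k + 1, h => by
    rw [stirling2, stirling2_eq_zero n k (by omega), stirling2_eq_zero n (k+1) (by omega)]
    ring

lemma stirling2_succ_zero (n : ℕ) : stirling2 (n + 1) 0 = 0 := rfl

lemma stirling2_rec (n k : ℕ) :
    stirling2 (n + 1) (k + 1) = stirling2 n k + (k + 1) * stirling2 n (k + 1) := rfl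

lemma stirling2_succ_one (n : ℕ) : stirling2 (n + 1) 1 = 1 := by
  induction n with
  | zero => rfl
  | succ n ih => rw [stirling2_rec, stirling2_succ_zero, ih]

lemma stirling2_succ_succ (n k : ℕ) :
    stirling2 (n + 1) (k + 1) = ∑ i ∈ Finset.range (n + 1), Nat.choose n i * stirling2 i k := by
  induction n generalizing k with
  | zero => cases k <;> simp [stirling2]
  | succ n ih =>
    rw [Finset.sum_range_succ']
    cases k with
    | zero =>
      simp [stirling2_succ_zero, stirling2_succ_one, show stirling2 0 0 = 1 from rfl]
    | succ k =>
      have h2 : ∑ i ∈ Finset.range (n+1), Nat.choose n (i+1) * stirling2 (i+1) (k+1)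
          = stirling2 (n+1) (k+2) := by
        have h := Finset.sum_range_succ' (fun i => Nat.choose n i * stirling2 i (k+1)) (n+1)
        rw [Finset.sum_range_succ] at h
        simp only [Nat.choose_succ_self, Nat.zero_mul, Nat.add_zero, Nat.choose_zero_right,
          Nat.one_mul] at h
        rw [← ih (k+1), show stirling2 0 (k+1) = 0 from rfl, Nat.add_zero] at h
        exact h.symm
      have expand : ∀ i, Nat.choose (n+1) (i+1) * stirling2 (i+1) (k+1)
          = Nat.choose n i * stirling2 i k + (k+1) * (Nat.choose n i * stirling2 i (k+1))
            + Nat.choose n (i+1) * stirling2 (i+1) (k+1) := by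
        intro i
        rw [Nat.choose_succ_succ, Nat.add_mul]
        nth_rewrite 1 [stirling2_rec]
        ring
      rw [show stirling2 0 (k+1) = 0 from rfl, Nat.mul_zero, Nat.add_zero]
      simp only [expand]
      rw [Finset.sum_add_distrib, Finset.sum_add_distrib, ← Finset.mul_sum, ← ih k, ← ih (k+1), h2]
      rw [stirling2_rec (n+1) (k+1)]
      ring

lemma sum_stirling2 (i N : ℕ) (h : i ≤ N) :
    ∑ k ∈ Finset.range (N + 1), stirling2 i k = bell i := by
  rw [bell]
  symm
  apply Finset.sum_subset (Finset.range_subset_range.mpr (by omega))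
  intro x _ hx
  exact stirling2_eq_zero i x (by simp at hx; omega)

lemma bell_succ (n : ℕ) : bell (n + 1) = ∑ k ∈ Finset.range (n + 1), Nat.choose n k * bell k := by
  rw [bell, Finset.sum_range_succ', stirling2_succ_zero, Nat.add_zero]
  simp only [stirling2_succ_succ]
  rw [Finset.sum_comm]
  apply Finset.sum_congr rfl
  intro i hi
  rw [← Finset.mul_sum, sum_stirling2 i n (by simp at hi; omega)]

lemma binom_sum (N j : ℕ) :
    ∑ t ∈ Finset.range (N + 1), Nat.choose N t * j ^ (N - t) = (j + 1) ^ N := by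
  rw [add_pow, ← Finset.sum_range_reflect]
  apply Finset.sum_congr rfl
  intro t ht
  simp only [Finset.mem_range] at ht
  have h1 : N + 1 - 1 - t = N - t := by omega
  have h2 : N - (N - t) = t := by omega
  rw [h1, one_pow, mul_one, h2, Nat.choose_symm (show t ≤ N by omega), Nat.cast_id, mul_comm]

lemma choose_choose_pow (n i j : ℕ) :
    ∑ k ∈ Finset.range (n + 1), Nat.choose n k * Nat.choose k i * j ^ (n - k)
      = Nat.choose n i * (j + 1) ^ (n - i) := by
  by_cases hi : i ≤ n
  · have hstep : ∑ k ∈ Finset.range (n + 1), Nat.choose n k * Nat.choose k i * j ^ (n - k)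
        = ∑ k ∈ Finset.Ico i (n + 1), Nat.choose n k * Nat.choose k i * j ^ (n - k) := by
      symm
      apply Finset.sum_subset
      · intro x hx; simp only [Finset.mem_Ico] at hx; simp only [Finset.mem_range]; omega
      · intro x hx hx'
        simp only [Finset.mem_range] at hx
        simp only [Finset.mem_Ico] at hx'
        rw [Nat.choose_eq_zero_of_lt (show x < i by omega)]
        ring
    rw [hstep, Finset.sum_Ico_eq_sum_range]
    have hlen : n + 1 - i = n - i + 1 := by omega
    rw [hlen]
    have hterm : ∀ t ∈ Finset.range (n - i + 1),
        Nat.choose n (i + t) * Nat.choose (i + t) i * j ^ (n - (i + t))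
          = Nat.choose n i * (Nat.choose (n - i) t * j ^ (n - i - t)) := by
      intro t ht
      simp only [Finset.mem_range] at ht
      rw [Nat.choose_mul (show i ≤ i + t by omega)]
      have e1 : i + t - i = t := by omega
      have e2 : n - (i + t) = n - i - t := by omega
      rw [e1, e2, mul_assoc]
    rw [Finset.sum_congr rfl hterm, ← Finset.mul_sum, binom_sum]
  · rw [Nat.choose_eq_zero_of_lt (by omega), Nat.zero_mul]
    apply Finset.sum_eq_zero
    intro k hk
    simp only [Finset.mem_range] at hk
    rw [Nat.choose_eq_zero_of_lt (show k < i by omega)]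
    ring

lemma key (n j : ℕ) :
    ∑ k ∈ Finset.range (n + 1), Nat.choose n k * j ^ (n - k) * bell (k + 1)
      = ∑ k ∈ Finset.range (n + 1), Nat.choose n k * (j + 1) ^ (n - k) * bell k := by
  have step1 : ∀ k ∈ Finset.range (n + 1),
      Nat.choose n k * j ^ (n - k) * bell (k + 1)
        = ∑ i ∈ Finset.range (n + 1),
            Nat.choose n k * j ^ (n - k) * (Nat.choose k i * bell i) := by
    intro k hk
    simp only [Finset.mem_range] at hk
    rw [bell_succ, Finset.mul_sum]
    apply Finset.sum_subset
    · exact Finset.range_subset_range.mpr (by omega)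
    · intro x hx hx'
      simp only [Finset.mem_range] at hx hx'
      rw [Nat.choose_eq_zero_of_lt (show k < x by omega)]
      ring
  rw [Finset.sum_congr rfl step1, Finset.sum_comm]
  apply Finset.sum_congr rfl
  intro i hi
  have hre : ∀ k, Nat.choose n k * j ^ (n - k) * (Nat.choose k i * bell i)
      = Nat.choose n k * Nat.choose k i * j ^ (n - k) * bell i := fun k => by ring
  simp only [hre]
  rw [← Finset.sum_mul, choose_choose_pow]

lemma transfer (n m : ℕ) :
    (∑ k ∈ Finset.range (n + 1), ∑ j ∈ Finset.range (m + 1 + 1),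
        j ^ (n - k) * stirling2 (m + 1) j * Nat.choose n k * bell k)
      = ∑ k ∈ Finset.range (n + 1 + 1), ∑ j ∈ Finset.range (m + 1),
          j ^ (n + 1 - k) * stirling2 m j * Nat.choose (n + 1) k * bell k := by
  -- common middle form
  have hL : (∑ k ∈ Finset.range (n + 1), ∑ j ∈ Finset.range (m + 1 + 1),
        j ^ (n - k) * stirling2 (m + 1) j * Nat.choose n k * bell k)
      = (∑ k ∈ Finset.range (n + 1), ∑ j ∈ Finset.range (m + 1),
          (j + 1) ^ (n - k) * stirling2 m j * Nat.choose n k * bell k)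
        + ∑ k ∈ Finset.range (n + 1), ∑ j ∈ Finset.range (m + 1),
            j ^ (n + 1 - k) * stirling2 m j * Nat.choose n k * bell k := by
    rw [← Finset.sum_add_distrib]
    apply Finset.sum_congr rfl
    intro k hk
    simp only [Finset.mem_range] at hk
    rw [Finset.sum_range_succ']
    rw [show (0:ℕ) ^ (n - k) * stirling2 (m + 1) 0 * Nat.choose n k * bell k = 0 by
      rw [stirling2_succ_zero]; ring]
    rw [Nat.add_zero]
    have hterm : ∀ j, (j + 1) ^ (n - k) * stirling2 (m + 1) (j + 1) * Nat.choose n k * bell k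
        = (j + 1) ^ (n - k) * stirling2 m j * Nat.choose n k * bell k
          + (j + 1) ^ (n - k + 1) * stirling2 m (j + 1) * Nat.choose n k * bell k := by
      intro j
      rw [stirling2_rec, pow_succ]
      ring
    simp only [hterm]
    rw [Finset.sum_add_distrib]
    congr 1
    -- second sum : shift
    set g : ℕ → ℕ := fun j => j ^ (n + 1 - k) * stirling2 m j * Nat.choose n k * bell k with hg
    have hshift : ∀ j, (j + 1) ^ (n - k + 1) * stirling2 m (j + 1) * Nat.choose n k * bell k
        = g (j + 1) := by
      intro j
      rw [hg]
      have hnk : n + 1 - k = n - k + 1 := by omega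
      simp only [hnk]
    simp only [hshift]
    have e1 := Finset.sum_range_succ' g (m + 1)
    have e2 := Finset.sum_range_succ g (m + 1)
    have hg0 : g 0 = 0 := by
      rw [hg]; simp only []; rw [zero_pow (by omega : n + 1 - k ≠ 0)]; ring
    have hgm : g (m + 1) = 0 := by
      rw [hg]; simp only []; rw [stirling2_eq_zero m (m + 1) (by omega)]; ring
    simp only [hg0, hgm, Nat.add_zero] at e1 e2
    exact e1.symm.trans e2
  have hR : (∑ k ∈ Finset.range (n + 1 + 1), ∑ j ∈ Finset.range (m + 1),
          j ^ (n + 1 - k) * stirling2 m j * Nat.choose (n + 1) k * bell k)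
      = (∑ k ∈ Finset.range (n + 1), ∑ j ∈ Finset.range (m + 1),
          (j + 1) ^ (n - k) * stirling2 m j * Nat.choose n k * bell k)
        + ∑ k ∈ Finset.range (n + 1), ∑ j ∈ Finset.range (m + 1),
            j ^ (n + 1 - k) * stirling2 m j * Nat.choose n k * bell k := by
    rw [Finset.sum_range_succ']
    have hterm : ∀ k, (∑ j ∈ Finset.range (m + 1),
          j ^ (n + 1 - (k + 1)) * stirling2 m j * Nat.choose (n + 1) (k + 1) * bell (k + 1))
        = (∑ j ∈ Finset.range (m + 1),
            j ^ (n - k) * stirling2 m j * Nat.choose n k * bell (k + 1))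
          + ∑ j ∈ Finset.range (m + 1),
              j ^ (n - k) * stirling2 m j * Nat.choose n (k + 1) * bell (k + 1) := by
      intro k
      rw [← Finset.sum_add_distrib]
      apply Finset.sum_congr rfl
      intro j _
      rw [Nat.choose_succ_succ, Nat.succ_sub_succ]
      ring
    simp only [hterm]
    rw [Finset.sum_add_distrib]
    -- regroup: part1 + (part2 + k=0 term)
    rw [Nat.add_assoc]
    congr 1
    · -- part1 via key
      rw [Finset.sum_comm]
      nth_rewrite 2 [Finset.sum_comm]
      apply Finset.sum_congr rfl
      intro j _
      have h1 : ∀ k, j ^ (n - k) * stirling2 m j * Nat.choose n k * bell (k + 1)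
          = stirling2 m j * (Nat.choose n k * j ^ (n - k) * bell (k + 1)) := fun k => by ring
      have h2 : ∀ k, (j + 1) ^ (n - k) * stirling2 m j * Nat.choose n k * bell k
          = stirling2 m j * (Nat.choose n k * (j + 1) ^ (n - k) * bell k) := fun k => by ring
      simp only [h1, h2]
      rw [← Finset.mul_sum, ← Finset.mul_sum, key]
    · -- part2 + first term
      set G : ℕ → ℕ := fun k => ∑ j ∈ Finset.range (m + 1),
          j ^ (n + 1 - k) * stirling2 m j * Nat.choose n k * bell k with hG
      have hGsucc : ∀ k, (∑ j ∈ Finset.range (m + 1),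
          j ^ (n - k) * stirling2 m j * Nat.choose n (k + 1) * bell (k + 1)) = G (k + 1) := by
        intro k
        rw [hG]
        simp only [Nat.succ_sub_succ]
      have hG0 : (∑ j ∈ Finset.range (m + 1),
          j ^ (n + 1 - 0) * stirling2 m j * Nat.choose (n + 1) 0 * bell 0) = G 0 := by
        rw [hG]
        simp [Nat.choose_zero_right]
      have hGtop : G (n + 1) = 0 := by
        rw [hG]
        apply Finset.sum_eq_zero
        intro j _
        rw [Nat.choose_succ_self]
        ring
      simp only [hGsucc]
      rw [hG0]
      have e1 := Finset.sum_range_succ' G (n + 1)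
      have e2 := Finset.sum_range_succ G (n + 1)
      rw [hGtop, Nat.add_zero] at e2
      exact e1.symm.trans e2
  rw [hL, hR]

/-- Spivey's Bell number formula. -/
theorem spivey_bell (n m : ℕ) :
    bell (n + m) =
      ∑ k ∈ Finset.range (n + 1), ∑ j ∈ Finset.range (m + 1),
        j ^ (n - k) * stirling2 m j * Nat.choose n k * bell k := by
  induction m generalizing n with
  | zero =>
    simp only [Nat.add_zero, Nat.zero_add, Finset.sum_range_one]
    rw [Finset.sum_eq_single n]
    · rw [Nat.sub_self, pow_zero, Nat.choose_self, show stirling2 0 0 = 1 from rfl]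
      ring
    · intro b hb hbn
      simp only [Finset.mem_range] at hb
      rw [zero_pow (show n - b ≠ 0 by omega)]
      ring
    · intro h
      exact absurd (Finset.self_mem_range_succ n) h
  | succ m ih =>
    rw [show n + (m + 1) = (n + 1) + m by omega, ih (n + 1), ← transfer]
end

section
/- Let R be a commutative ring, q ∈ R, A an associative unital R-algebra, and a, b ∈ A satisfying the q-commutation relation a*b - q•(b*a) = 1. Then for every natural number k: (b*a)*(b^k) = (b^k)*([k]_q • 1 + q^k • (b*a)). -/
/-- The q-integer [n]_q. -/
def qInt {R : Type*} [CommRing R] (q : R) (n : ℕ) : R :=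
  ∑ i ∈ Finset.range n, q ^ i


/-- The identity (b a) b^k = b^k ([k]_q + q^k b a). -/
theorem qBoson_numberOp_pow {R : Type*} [CommRing R] (q : R) {A : Type*} [Ring A]
    [Algebra R A] (a b : A) (h : a * b - q • (b * a) = 1) (k : ℕ) :
    (b * a) * b ^ k = b ^ k * (qInt q k • (1 : A) + q ^ k • (b * a)) := by
  have hab : a * b = 1 + q • (b * a) := by linear_combination (norm := module) h
  induction k with
  | zero => simp [qInt]
  | succ k ih =>
    have hq : qInt q (k + 1) = qInt q k + q ^ k := by
      simp [qInt, Finset.sum_range_succ]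
    rw [pow_succ, ← mul_assoc, ih, mul_assoc, mul_assoc]
    have key : (qInt q k • (1 : A) + q ^ k • (b * a)) * b
        = b * (qInt q (k + 1) • (1 : A) + q ^ (k + 1) • (b * a)) := by
      simp only [add_mul, mul_add, smul_mul_assoc, mul_smul_comm, one_mul, mul_one,
        mul_assoc, hab, hq, pow_succ, smul_add, smul_smul, add_smul]
      module
    rw [key]
end

section
/- Let R be a commutative ring, q, m, r ∈ R, A an associative unital R-algebra, and a, b ∈ A satisfying the q-commutation relation a*b - q•(b*a) = 1. Then for every natural number k: (m•(b*a) + r•1)*(b^k) = (b^k)*((m*[k]_q + r)•1 + (m*q^k)•(b*a)). -/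
/-- The identity (m b a + r) b^k = b^k ((m [k]_q + r) + m q^k b a). -/
theorem qBoson_affine_numberOp_pow {R : Type*} [CommRing R] (q m r : R) {A : Type*}
    [Ring A] [Algebra R A] (a b : A) (h : a * b - q • (b * a) = 1) (k : ℕ) :
    (m • (b * a) + r • (1 : A)) * b ^ k =
      b ^ k * ((m * qInt q k + r) • (1 : A) + (m * q ^ k) • (b * a)) := by
  induction k with
  | zero => simp [qInt]; abel
  | succ k ih =>
    have hab : a * b = 1 + q • (b * a) := eq_add_of_sub_eq h
    have key : (b * a) * b = b + q • (b * (b * a)) := by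
      rw [mul_assoc, hab, mul_add, mul_one, mul_smul_comm]
    rw [pow_succ, ← mul_assoc, ih, mul_assoc, mul_assoc]
    congr 1
    simp only [add_mul, mul_add, smul_mul_assoc, mul_smul_comm, one_mul, mul_one, key,
      smul_add, smul_smul, qInt, Finset.sum_range_succ]
    module
end

section
/- Let R be a commutative ring, q ∈ R, A an associative unital R-algebra, and a, b ∈ A satisfying the q-commutation relation a*b - q•(b*a) = 1. Let M be a module over A and let v ∈ M satisfy a • v = 0. Then for all natural numbers k and s: (b^k * a^k) • (b^s • v) = [s]_{q,k} • (b^s • v), where [s]_{q,k} = \prod_{i=0}^{k-1} [s-i]_q (which equals 0 when k > s). -/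
section aux
variable {R : Type*} [CommRing R] (q : R) {A : Type*} [Ring A]
    [Algebra R A] (a b : A) (h : a * b - q • (b * a) = 1) {M : Type*}
    [AddCommMonoid M] [Module A M] [Module R M] [IsScalarTower R A M]
    (v : M) (hv : a • v = 0)

lemma smul_comm_aux (r : R) (x : A) (m : M) : x • (r • m) = r • (x • m) := by
  rw [← IsScalarTower.algebraMap_smul A r m, ← mul_smul, ← Algebra.commutes r x,
    mul_smul, IsScalarTower.algebraMap_smul]

lemma qInt_succ (n : ℕ) : qInt q (n + 1) = q * qInt q n + 1 := by
  simp [qInt, Finset.sum_range_succ', pow_succ, Finset.mul_sum, mul_comm]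

lemma b_shift (n : ℕ) : qInt q n • (b • ((b ^ (n - 1)) • v)) = qInt q n • ((b ^ n) • v) := by
  cases n with
  | zero => simp [qInt]
  | succ m => rw [Nat.add_sub_cancel, ← mul_smul, ← pow_succ']

include h hv in
lemma qBoson_step (m : ℕ) : a • ((b ^ m) • v) = qInt q m • ((b ^ (m - 1)) • v) := by
  have hab : a * b = q • (b * a) + 1 := by linear_combination (norm := noncomm_ring) h
  induction m with
  | zero => simp [qInt, hv]
  | succ n ih =>
    rw [pow_succ', mul_smul, ← mul_smul, hab, add_smul, one_smul, smul_assoc, mul_smul,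
      ih, smul_comm_aux, b_shift, Nat.add_sub_cancel, qInt_succ, add_smul, one_smul,
      mul_smul]

include h hv in
lemma qBoson_a_pow (k s : ℕ) : (a ^ k) • ((b ^ s) • v) =
    (∏ i ∈ Finset.range k, qInt q (s - i)) • ((b ^ (s - k)) • v) := by
  induction k with
  | zero => simp
  | succ n ih =>
    rw [pow_succ', mul_smul, ih, smul_comm_aux, qBoson_step q a b h v hv,
      Finset.prod_range_succ, ← smul_smul, Nat.sub_sub]

end aux

/-- Fock states are eigenvectors of b^k a^k with eigenvalue the q-falling factorial. -/
theorem qBoson_fock_eigen {R : Type*} [CommRing R] (q : R) {A : Type*} [Ring A]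
    [Algebra R A] (a b : A) (h : a * b - q • (b * a) = 1) {M : Type*}
    [AddCommMonoid M] [Module A M] [Module R M] [IsScalarTower R A M]
    (v : M) (hv : a • v = 0) (k s : ℕ) :
    (b ^ k * a ^ k) • ((b ^ s) • v) =
      (∏ i ∈ Finset.range k, qInt q (s - i)) • ((b ^ s) • v) := by
  rw [mul_smul, qBoson_a_pow q a b h v hv, smul_comm_aux, ← mul_smul, ← pow_add]
  rcases le_or_gt k s with hks | hks
  · rw [Nat.add_sub_cancel' hks]
  · have hz : (∏ i ∈ Finset.range k, qInt q (s - i)) = 0 :=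
      Finset.prod_eq_zero (Finset.mem_range.mpr hks) (by simp [qInt])
    simp [hz]
end
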